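/- Let G be a finite abelian group, F ⊂ K = F(ω) as above, Γ = Gal(K/F), and V_χ ⊂ F(G,F) the irreducible summand corresponding to the Γ-orbit of χ ∈ Ĝ. Then K ⊗_F V_χ admits a K-basis {f_ψ : ψ ∈ Γ·χ} such that each line K f_ψ is G-invariant with G acting through ψ, and γ(f_ψ) = f_{γ·ψ} for all γ ∈ Γ and ψ ∈ Γ·χ. -/

import Mathlib

/-- The action of the Galois group on characters : `(γ · χ)(g) = γ(χ(g))`. -/
def galChar {F K G : Type*} [Field F] [Field K] [Algebra F K] [Group G]
    (γ : K ≃ₐ[F] K) (χ : G →* Kˣ) : G →* Kˣ :=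
  (Units.map (γ : K →* K)).comp χ

/-- Let `V_χ ⊆ F(G,F)` be the minimal `G`-invariant subspace of the regular representation
corresponding to the `Γ`-orbit of the character `χ`. Then the `K`-span `W` of `V_χ` in
`F(G,K)` has a `K`-basis `{f_ψ : ψ ∈ Γ·χ}` such that each line `K f_ψ` is `G`-stable with
`G` acting through `ψ`, and `γ(f_ψ) = f_{γ·ψ}` for all `γ ∈ Γ`. -/
theorem exists_galois_equivariant_eigenbasis
    {G : Type*} [CommGroup G] [Fintype G]
    {F K : Type*} [Field F] [Field K] [Algebra F K]
    (hchar : (Fintype.card G : F) ≠ 0)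
    (ω : K) (hω : orderOf ω = Monoid.exponent G)
    (hK : IntermediateField.adjoin F {ω} = ⊤)
    (χ : G →* Kˣ)
    (V : Submodule F (G → F))
    (hVinv : ∀ (g : G), ∀ v ∈ V, (fun h => v (g⁻¹ * h)) ∈ V)
    (hVne : V ≠ ⊥)
    (hVmin : ∀ W : Submodule F (G → F), W ≤ V →
      (∀ (g : G), ∀ v ∈ W, (fun h => v (g⁻¹ * h)) ∈ W) → W = ⊥ ∨ W = V)
    -- `V` corresponds to the `Γ`-orbit of `χ`: its `K`-span contains a `χ`-eigenvector
    (hVχ : ∃ v₀ : G → K, v₀ ≠ 0 ∧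
      v₀ ∈ Submodule.span K ((fun (v : G → F) => fun h => algebraMap F K (v h)) '' V) ∧
      ∀ g : G, (fun h => v₀ (g⁻¹ * h)) = fun h => ((χ g : Kˣ) : K) * v₀ h) :
    ∃ f : (G →* Kˣ) → (G → K),
      LinearIndependent K
        (fun ψ : {ψ : G →* Kˣ // ∃ γ : K ≃ₐ[F] K, ψ = galChar γ χ} => f (ψ : G →* Kˣ)) ∧
      Submodule.span K (f '' {ψ : G →* Kˣ | ∃ γ : K ≃ₐ[F] K, ψ = galChar γ χ}) =
        Submodule.span K ((fun (v : G → F) => fun h => algebraMap F K (v h)) '' V) ∧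
      (∀ ψ : G →* Kˣ, (∃ γ : K ≃ₐ[F] K, ψ = galChar γ χ) →
        ∀ g : G, (fun h => f ψ (g⁻¹ * h)) = fun h => ((ψ g : Kˣ) : K) * f ψ h) ∧
      (∀ (γ : K ≃ₐ[F] K) (ψ : G →* Kˣ), (∃ γ' : K ≃ₐ[F] K, ψ = galChar γ' χ) →
        (fun h => γ (f ψ h)) = f (galChar γ ψ)) := by
  classical
  -- ### Step 0 : `K/F` is a finite Galois (cyclotomic) extension
  have hepos : 0 < Monoid.exponent G :=
    Nat.pos_of_ne_zero Monoid.exponent_ne_zero_of_finite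
  set e : ℕ+ := ⟨Monoid.exponent G, hepos⟩ with he
  have hωe : ω ^ (e : ℕ) = 1 := by
    show ω ^ (Monoid.exponent G) = 1
    rw [← hω]; exact pow_orderOf_eq_one ω
  have hint : IsIntegral F ω := by
    refine ⟨Polynomial.X ^ (e : ℕ) - Polynomial.C 1, Polynomial.monic_X_pow_sub_C 1 e.2.ne', ?_⟩
    simp [hωe]
  have halg : Algebra.adjoin F {ω} = ⊤ := by
    rw [← IntermediateField.adjoin_simple_toSubalgebra_of_isAlgebraic hint.isAlgebraic, hK]
    rfl
  have hprim : IsPrimitiveRoot ω (e : ℕ) := by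
    have := IsPrimitiveRoot.orderOf ω
    rwa [hω] at this
  have hcyc : IsCyclotomicExtension {(e : ℕ)} F K := by
    refine (IsCyclotomicExtension.iff_adjoin_eq_top {(e : ℕ)} F K).2 ⟨?_, ?_⟩
    · intro n hn _
      rw [Set.mem_singleton_iff] at hn
      exact ⟨ω, hn ▸ hprim⟩
    · rw [eq_top_iff, ← halg]
      exact Algebra.adjoin_mono (by
        rintro x rfl
        exact ⟨(e : ℕ), Set.mem_singleton _, e.ne_zero, hωe⟩)
  haveI := hcyc
  haveI : FiniteDimensional F K := IsCyclotomicExtension.finiteDimensional {(e : ℕ)} F K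
  haveI : IsGalois F K := IsCyclotomicExtension.isGalois {(e : ℕ)} F K
  -- ### Step 1 : the eigenfunctions and their basic properties
  set O : Set (G →* Kˣ) := {ψ : G →* Kˣ | ∃ γ : K ≃ₐ[F] K, ψ = galChar γ χ} with hO
  set f : (G →* Kˣ) → (G → K) := fun ψ h => ((ψ h : K))⁻¹ with hf
  have heig : ∀ (ψ : G →* Kˣ) (g : G),
      (fun h => f ψ (g⁻¹ * h)) = fun h => ((ψ g : Kˣ) : K) * f ψ h := by
    intro ψ g; funext h
    show ((ψ (g⁻¹ * h) : K))⁻¹ = (ψ g : K) * ((ψ h : K))⁻¹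
    rw [map_mul, map_inv]
    simp [mul_inv, inv_inv, mul_comm]
  have hgal : ∀ (γ : K ≃ₐ[F] K) (ψ : G →* Kˣ),
      (fun h => γ (f ψ h)) = f (galChar γ ψ) := by
    intro γ ψ; funext h
    show γ (((ψ h : K))⁻¹) = ((galChar γ ψ h : K))⁻¹
    rw [map_inv₀]
    congr 1
  have hOclosed : ∀ (γ : K ≃ₐ[F] K), ∀ ψ ∈ O, galChar γ ψ ∈ O := by
    rintro γ ψ ⟨γ', rfl⟩
    exact ⟨γ'.trans γ, MonoidHom.ext fun g => Units.ext rfl⟩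
  have hχO : χ ∈ O := ⟨AlgEquiv.refl, MonoidHom.ext fun g => Units.ext rfl⟩
  -- ### Step 2 : the two spans
  set W : Submodule K (G → K) :=
    Submodule.span K ((fun (v : G → F) => fun h => algebraMap F K (v h)) '' V) with hW
  set U : Submodule K (G → K) := Submodule.span K (f '' O) with hU
  -- `W` is stable under the (entrywise, semilinear) Galois action
  have hWgal : ∀ (γ : K ≃ₐ[F] K), ∀ w ∈ W, (fun h => γ (w h)) ∈ W := by
    intro γ w hw
    obtain ⟨m, c, s, rfl⟩ := Submodule.mem_span_set'.1 hw
    choose v hvV hvs using fun i => (s i).2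
    have key : (fun h => γ ((∑ i, c i • (s i : G → K)) h))
        = ∑ i, γ (c i) • ((fun h => algebraMap F K (v i h)) : G → K) := by
      funext h
      simp only [Finset.sum_apply, Pi.smul_apply, smul_eq_mul, map_sum, map_mul]
      refine Finset.sum_congr rfl fun i _ => ?_
      rw [← hvs i]
      simp [AlgEquiv.commutes]
    rw [key]
    exact Submodule.sum_mem _ fun i _ => Submodule.smul_mem _ _
      (Submodule.subset_span ⟨v i, hvV i, rfl⟩)
  -- `U` is stable under the Galois action
  have hUgal : ∀ (γ : K ≃ₐ[F] K), ∀ u ∈ U, (fun h => γ (u h)) ∈ U := by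
    intro γ u hu
    obtain ⟨m, c, s, rfl⟩ := Submodule.mem_span_set'.1 hu
    choose ψ hψO hψf using fun i => (s i).2
    have key : (fun h => γ ((∑ i, c i • (s i : G → K)) h))
        = ∑ i, γ (c i) • f (galChar γ (ψ i)) := by
      funext h
      simp only [Finset.sum_apply, Pi.smul_apply, smul_eq_mul, map_sum, map_mul]
      refine Finset.sum_congr rfl fun i _ => ?_
      rw [← hψf i]
      exact congrArg (γ (c i) * ·) (congrFun (hgal γ (ψ i)) h)
    rw [key]
    exact Submodule.sum_mem _ fun i _ => Submodule.smul_mem _ _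
      (Submodule.subset_span ⟨_, hOclosed γ (ψ i) (hψO i), rfl⟩)
  -- `U` is stable under translation by `G`
  have hUG : ∀ (g : G), ∀ u ∈ U, (fun h => u (g⁻¹ * h)) ∈ U := by
    intro g u hu
    obtain ⟨m, c, s, rfl⟩ := Submodule.mem_span_set'.1 hu
    choose ψ hψO hψf using fun i => (s i).2
    have key : (fun h => (∑ i, c i • (s i : G → K)) (g⁻¹ * h))
        = ∑ i, (c i * ((ψ i g : Kˣ) : K)) • f (ψ i) := by
      funext h
      simp only [Finset.sum_apply, Pi.smul_apply, smul_eq_mul]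
      refine Finset.sum_congr rfl fun i _ => ?_
      rw [← hψf i, congrFun (heig (ψ i) g) h]
      ring
    rw [key]
    exact Submodule.sum_mem _ fun i _ => Submodule.smul_mem _ _
      (Submodule.subset_span ⟨_, hψO i, rfl⟩)
  -- ### Step 3 : U ≤ W using the eigenvector `v₀`
  obtain ⟨v₀, hv₀ne, hv₀W, hv₀eig⟩ := hVχ
  have hv₀val : ∀ h : G, v₀ h = ((χ h : K))⁻¹ * v₀ 1 := by
    intro h
    have h1 := congrFun (hv₀eig h⁻¹) 1
    simp only [inv_inv, mul_one] at h1
    rw [h1, map_inv, Units.val_inv_eq_inv_val]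
  have hv₀1 : v₀ 1 ≠ 0 := by
    intro h0
    exact hv₀ne (funext fun h => by rw [hv₀val h, h0, mul_zero]; rfl)
  have hfχ : f χ = (v₀ 1)⁻¹ • v₀ := by
    funext h
    show ((χ h : K))⁻¹ = (v₀ 1)⁻¹ * v₀ h
    rw [hv₀val h, mul_comm ((χ h : K))⁻¹ (v₀ 1), ← mul_assoc, inv_mul_cancel₀ hv₀1, one_mul]
  have hfχW : f χ ∈ W := by
    rw [hfχ]; exact Submodule.smul_mem _ _ hv₀W
  have hfψW : ∀ ψ ∈ O, f ψ ∈ W := by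
    rintro ψ ⟨γ, rfl⟩
    rw [← hgal γ χ]
    exact hWgal γ _ hfχW
  have hUleW : U ≤ W :=
    Submodule.span_le.2 (by rintro _ ⟨ψ, hψ, rfl⟩; exact hfψW ψ hψ)
  -- ### Step 4 : a nonzero `F`-valued vector in `U ∩ W`
  obtain ⟨c, hc⟩ : ∃ c : K, Algebra.trace F K c ≠ 0 := by
    by_contra h
    push_neg at h
    exact Algebra.trace_ne_zero F K (LinearMap.ext h)
  have hcfχU : c • f χ ∈ U :=
    Submodule.smul_mem _ _ (Submodule.subset_span ⟨χ, hχO, rfl⟩)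
  have hcfχW : c • f χ ∈ W := Submodule.smul_mem _ _ hfχW
  set u : G → K := fun h => algebraMap F K (Algebra.trace F K (c * f χ h)) with hu
  have husum : u = ∑ γ : K ≃ₐ[F] K, (fun h => γ ((c • f χ) h)) := by
    funext h
    simp only [Finset.sum_apply, Pi.smul_apply, smul_eq_mul]
    exact trace_eq_sum_automorphisms _
  have huU : u ∈ U := by
    rw [husum]
    exact Submodule.sum_mem _ fun γ _ => hUgal γ _ hcfχU
  have huW : u ∈ W := by
    rw [husum]
    exact Submodule.sum_mem _ fun γ _ => hWgal γ _ hcfχW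
  -- a retraction `π : K →ₗ[F] F` of `algebraMap`
  obtain ⟨π, hπ⟩ := (Algebra.linearMap F K).exists_leftInverse_of_injective
    (LinearMap.ker_eq_bot.2 (algebraMap F K).injective)
  have hπa : ∀ a : F, π (algebraMap F K a) = a := fun a => LinearMap.ext_iff.1 hπ a
  -- `π` maps `W` into `V` (entrywise)
  have hπV : ∀ w ∈ W, (fun h => π (w h)) ∈ V := by
    intro w hw
    obtain ⟨m, c', s, rfl⟩ := Submodule.mem_span_set'.1 hw
    choose v hvV hvs using fun i => (s i).2
    have key : (fun h => π ((∑ i, c' i • (s i : G → K)) h)) = ∑ i, π (c' i) • v i := by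
      funext h
      simp only [Finset.sum_apply, Pi.smul_apply, smul_eq_mul, map_sum]
      refine Finset.sum_congr rfl fun i _ => ?_
      rw [← hvs i]
      have hsm : c' i * algebraMap F K (v i h) = v i h • c' i := by
        rw [Algebra.smul_def, mul_comm]
      rw [hsm, LinearMap.map_smul, smul_eq_mul, mul_comm]
    rw [key]
    exact Submodule.sum_mem _ fun i _ => Submodule.smul_mem _ _ (hvV i)
  set v : G → F := fun h => π (u h) with hv
  have hvV : v ∈ V := hπV u huW
  have hιv : (fun h => algebraMap F K (v h)) = u := by
    funext h
    show algebraMap F K (π (u h)) = u h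
    rw [show u h = algebraMap F K (Algebra.trace F K (c * f χ h)) from rfl, hπa]
  have hv1 : v 1 ≠ 0 := by
    have hfχ1 : f χ 1 = 1 := by
      show ((χ 1 : K))⁻¹ = 1
      rw [map_one, Units.val_one, inv_one]
    have : v 1 = Algebra.trace F K c := by
      show π (u 1) = Algebra.trace F K c
      rw [show u 1 = algebraMap F K (Algebra.trace F K (c * f χ 1)) from rfl, hfχ1, mul_one, hπa]
    rw [this]; exact hc
  -- ### Step 5 : W ≤ U by minimality of V
  let ιL : (G → F) →ₗ[F] (G → K) :=
    { toFun := fun x => fun h => algebraMap F K (x h)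
      map_add' := by intro a b; funext h; simp
      map_smul' := by intro a x; funext h; simp [Algebra.smul_def] }
  set V' : Submodule F (G → F) := V ⊓ Submodule.comap ιL (U.restrictScalars F) with hV'
  have hV'le : V' ≤ V := inf_le_left
  have hV'inv : ∀ g, ∀ x ∈ V', (fun h => x (g⁻¹ * h)) ∈ V' := by
    intro g x hx
    obtain ⟨hx1, hx2⟩ := Submodule.mem_inf.1 hx
    have hx2' : ιL x ∈ U := hx2
    refine Submodule.mem_inf.2 ⟨hVinv g x hx1, ?_⟩
    show ιL (fun h => x (g⁻¹ * h)) ∈ U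
    exact hUG g (ιL x) hx2'
  have hV'ne : V' ≠ ⊥ := by
    intro hbot
    have hvV' : v ∈ V' := by
      refine Submodule.mem_inf.2 ⟨hvV, ?_⟩
      show ιL v ∈ U
      have : ιL v = u := hιv
      rw [this]; exact huU
    rw [hbot, Submodule.mem_bot] at hvV'
    exact hv1 (by rw [hvV']; rfl)
  have hV'eq : V' = V := (hVmin V' hV'le hV'inv).resolve_left hV'ne
  have hWleU : W ≤ U := by
    rw [hW]
    refine Submodule.span_le.2 ?_
    rintro _ ⟨x, hxV, rfl⟩
    have hx : x ∈ V' := hV'eq ▸ hxV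
    have := (Submodule.mem_inf.1 hx).2
    exact this
  -- ### Step 6 : linear independence
  have hind : LinearIndependent K (fun ψ : {ψ : G →* Kˣ // ψ ∈ O} => f (ψ : G →* Kˣ)) := by
    let j : {ψ : G →* Kˣ // ψ ∈ O} → (G →* K) :=
      fun ψ => (Units.coeHom K).comp ((ψ : G →* Kˣ)⁻¹)
    have hjinj : Function.Injective j := by
      intro a b hab
      apply Subtype.ext
      have hinv : ((a : G →* Kˣ))⁻¹ = ((b : G →* Kˣ))⁻¹ := by
        ext g
        exact DFunLike.congr_fun hab g
      have := congrArg (·⁻¹) hinv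
      exact inv_injective hinv
    have hfj : (fun ψ : {ψ : G →* Kˣ // ψ ∈ O} => f (ψ : G →* Kˣ))
        = (fun φ : G →* K => ⇑φ) ∘ j := by
      funext ψ; funext h
      show (((ψ : G →* Kˣ) h : K))⁻¹ = (Units.coeHom K) (((ψ : G →* Kˣ)⁻¹) h)
      rw [MonoidHom.inv_apply]
      exact (Units.val_inv_eq_inv_val _).symm
    rw [hfj]
    exact (linearIndependent_monoidHom G K).comp j hjinj
  exact ⟨f, hind, le_antisymm hUleW hWleU, fun ψ _ g => heig ψ g, fun γ ψ _ => hgal γ ψ⟩
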